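/- Let p ≥ 5 be prime and a ≥ 1. Any complex irreducible representation of SL(2, ℤ/p^aℤ) that does not factor through the reduction map SL(2, ℤ/p^aℤ) → SL(2, ℤ/p^{a−1}ℤ) has dimension strictly greater than p^a/3. -/

import Mathlib

open Matrix Polynomial

namespace SL2Irrep

variable {R : Type*} [CommRing R]

/-- Upper unipotent. -/
def U (x : R) : SpecialLinearGroup (Fin 2) R :=
  ⟨!![1, x; 0, 1], by simp [Matrix.det_fin_two_of]⟩

/-- Lower unipotent. -/
def Lo (x : R) : SpecialLinearGroup (Fin 2) R :=
  ⟨!![1, 0; x, 1], by simp [Matrix.det_fin_two_of]⟩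

/-- The Weyl element. -/
def W : SpecialLinearGroup (Fin 2) R :=
  ⟨!![0, 1; -1, 0], by simp [Matrix.det_fin_two_of]⟩

/-- Diagonal element. -/
def Dm (x y : R) (h : x * y = 1) : SpecialLinearGroup (Fin 2) R :=
  ⟨!![x, 0; 0, y], by simp [Matrix.det_fin_two_of, h]⟩

theorem U_mul (x y : R) : U x * U y = U (x + y) := by
  apply Subtype.ext
  show (!![1, x; 0, 1] : Matrix _ _ R) * !![1, y; 0, 1] = _
  rw [Matrix.mul_fin_two]
  norm_num [U, add_comm]

theorem U_zero : (U (0:R)) = 1 := by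
  apply Subtype.ext
  show (!![1, 0; 0, 1] : Matrix _ _ R) = 1
  ext i j; fin_cases i <;> fin_cases j <;> simp

theorem U_pow (x : R) (k : ℕ) : (U x) ^ k = U (k * x) := by
  induction k with
  | zero => simp [U_zero]
  | succ n ih => rw [pow_succ, ih, U_mul]; congr 1; push_cast; ring

theorem U_inv (x : R) : (U x)⁻¹ = U (-x) := by
  apply inv_eq_of_mul_eq_one_right
  rw [U_mul, add_neg_cancel, U_zero]

theorem D_mul_U (x y c : R) (h : x * y = 1) :
    Dm x y h * U c = U (x * x * c) * Dm x y h := by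
  apply Subtype.ext
  simp only [Matrix.SpecialLinearGroup.coe_mul]
  ext i j
  fin_cases i <;> fin_cases j <;>
    simp [U, Dm, Matrix.mul_apply, Fin.sum_univ_two]
  linear_combination (-(x*c)) * h

theorem W_mul_U (c : R) : W * U c = Lo (-c) * W := by
  apply Subtype.ext
  simp only [Matrix.SpecialLinearGroup.coe_mul]
  ext i j
  fin_cases i <;> fin_cases j <;>
    simp [U, Lo, W, Matrix.mul_apply, Fin.sum_univ_two]

theorem LDU (A : SpecialLinearGroup (Fin 2) R) (e' : R) (h : A.1 0 0 * e' = 1) :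
    A = Lo (A.1 1 0 * e') * Dm (A.1 0 0) e' h * U (e' * A.1 0 1) := by
  have hdet : A.1 0 0 * A.1 1 1 - A.1 0 1 * A.1 1 0 = 1 := by
    have := A.2; rwa [Matrix.det_fin_two] at this
  apply Subtype.ext
  simp only [Matrix.SpecialLinearGroup.coe_mul]
  ext i j
  fin_cases i <;> fin_cases j <;>
    simp [U, Lo, Dm, Matrix.mul_apply, Fin.sum_univ_two]
  · linear_combination (-(A.1 0 1)) * h
  · linear_combination (-(A.1 1 0)) * h
  · linear_combination e' * hdet - (A.1 1 1 + A.1 0 1 * A.1 1 0 * e') * h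

theorem Dm_decomp_sq_zero (β : R) (hβ : β * β = 0)
    (h : (1 + β) * (1 - β) = 1) :
    Dm (1 + β) (1 - β) h = (U 1 * Lo β * U (-1)) * U β * Lo (-β) := by
  apply Subtype.ext
  simp only [Matrix.SpecialLinearGroup.coe_mul]
  ext i j
  fin_cases i <;> fin_cases j <;>
    simp [U, Lo, Dm, Matrix.mul_apply, Fin.sum_univ_two]
  · linear_combination β * hβ
  · linear_combination (-1 : R) * hβ
  · linear_combination (β - 1) * hβ
  · linear_combination (-1 : R) * hβ

theorem Dm_eq_decomp (β x y : R) (hβ : β * β = 0) (h : x * y = 1) (hx : x = 1 + β) :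
    Dm x y h = (U 1 * Lo β * U (-1)) * U β * Lo (-β) := by
  subst hx
  have hy : y = 1 - β := by linear_combination (1 - β) * h + y * hβ
  subst hy
  exact Dm_decomp_sq_zero β hβ _

theorem Dm_decomp_unit (g e' : R) (h : g * e' = 1) :
    Dm g e' h = U g * Lo (-e') * U g * U (-1) * Lo 1 * U (-1) := by
  apply Subtype.ext
  simp only [Matrix.SpecialLinearGroup.coe_mul]
  ext i j
  fin_cases i <;> fin_cases j <;>
    simp [U, Lo, Dm, Matrix.mul_apply, Fin.sum_univ_two]
  · linear_combination g * h
  · linear_combination (-1 : R) * h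
  · linear_combination h
  · ring

theorem exists_eig {V : Type} [AddCommGroup V] [Module ℂ V] [FiniteDimensional ℂ V]
    (f : Module.End ℂ V) (N M : ℕ) (hN : 0 < N)
    (hfN : f ^ N = 1) (hfM : f ^ M ≠ 1) :
    ∃ ζ : ℂ, f.HasEigenvalue ζ ∧ ζ ^ N = 1 ∧ ζ ^ M ≠ 1 := by
  set μ : ℂ[X] := minpoly ℂ f with hμ
  have hint : IsIntegral ℂ f := LinearMap.isIntegral f
  have hdvd : μ ∣ X ^ N - C 1 := by
    apply minpoly.dvd
    simp [aeval_def, eval₂_sub, eval₂_pow, hfN]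
  have hsepN : (X ^ N - C (1:ℂ)).Separable := by
    apply separable_X_pow_sub_C
    · exact_mod_cast Nat.cast_ne_zero.mpr hN.ne'
    · exact one_ne_zero
  have hsep : μ.Separable := hsepN.of_dvd hdvd
  by_contra hcon
  push_neg at hcon
  have hroots : ∀ ζ ∈ μ.roots, ζ ^ M = 1 := by
    intro ζ hζ
    have hr : μ.IsRoot ζ := isRoot_of_mem_roots hζ
    have hev : Module.End.HasEigenvalue f ζ := Module.End.hasEigenvalue_of_isRoot hr
    have hN1 : ζ ^ N = 1 := by
      have := hr.dvd hdvd
      simpa [IsRoot, sub_eq_zero] using this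
    exact hcon ζ hev hN1
  have hmonic : μ.Monic := minpoly.monic hint
  have hsplits : μ.Splits := IsAlgClosed.splits μ
  have hcard : μ.roots.card = μ.natDegree := (splits_iff_card_roots).mp hsplits
  have hnodup : μ.roots.Nodup := Polynomial.nodup_roots hsep
  set t : Finset ℂ := ⟨μ.roots, hnodup⟩ with ht
  have hprod : μ = ∏ a ∈ t, (X - C a) := by
    rw [Finset.prod_eq_multiset_prod]
    exact (prod_multiset_X_sub_C_of_monic_of_roots_card_eq hmonic hcard).symm
  have hdvdM : μ ∣ X ^ M - C 1 := by
    rw [hprod]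
    apply Finset.prod_dvd_of_coprime
    · intro a ha b hb hab
      exact (Polynomial.pairwise_coprime_X_sub_C Function.injective_id) hab
    · intro a ha
      rw [dvd_iff_isRoot]
      have : a ^ M = 1 := hroots a (by simpa [ht] using ha)
      simp [IsRoot, this]
  have haev : aeval f (X ^ M - C (1:ℂ)) = 0 := by
    obtain ⟨c, hc⟩ := hdvdM
    rw [hc, _root_.map_mul, minpoly.aeval, zero_mul]
  apply hfM
  rw [_root_.map_sub, map_pow, aeval_X, _root_.map_one, sub_eq_zero] at haev
  simpa using haev

end SL2Irrep

/-- An irreducible complex representation of SL(2, ℤ/p^aℤ) (p ≥ 5 prime, a ≥ 1) that does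
not factor through the reduction SL(2, ℤ/p^aℤ) → SL(2, ℤ/p^{a-1}ℤ) has dimension > p^a/3. -/
theorem dim_irrep_SL2_prime_power (p a : ℕ) (hp : p.Prime) (hp5 : 5 ≤ p) (ha : 1 ≤ a)
    (V : Type) [AddCommGroup V] [Module ℂ V] [FiniteDimensional ℂ V]
    (ρ : Representation ℂ (Matrix.SpecialLinearGroup (Fin 2) (ZMod (p ^ a))) V)
    (hirr : ∀ W : Submodule ℂ V,
      (∀ g, W.map (ρ g) ≤ W) → W = ⊥ ∨ W = ⊤)
    (hnofactor : ¬ ∃ ρ' : Representation ℂ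
        (Matrix.SpecialLinearGroup (Fin 2) (ZMod (p ^ (a - 1)))) V,
      ∀ g, ρ g = ρ' (Matrix.SpecialLinearGroup.map
        (ZMod.castHom (pow_dvd_pow p (Nat.sub_le a 1)) (ZMod (p ^ (a - 1)))) g)) :
    ((p : ℝ) ^ a) / 3 < (Module.finrank ℂ V : ℝ) := by
  classical
  have hppos : 0 < p := hp.pos
  haveI : NeZero (p ^ a) := ⟨pow_ne_zero _ hppos.ne'⟩
  set u : Matrix.SpecialLinearGroup (Fin 2) (ZMod (p ^ a)) := SL2Irrep.U 1 with hu
  set f : Module.End ℂ V := ρ u with hf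
  have hfN : f ^ (p ^ a) = 1 := by
    rw [hf, ← map_pow, hu, SL2Irrep.U_pow,
      show ((p ^ a : ℕ) : ZMod (p ^ a)) * 1 = 0 by simp [ZMod.natCast_self],
      SL2Irrep.U_zero, _root_.map_one]
  by_cases hfM : f ^ (p ^ (a - 1)) = 1
  · -- ρ factors through the reduction: contradiction
    exfalso
    apply hnofactor
    -- the kernel subgroup
    have memH : ∀ g, g ∈ MonoidHom.ker ρ.asGroupHom ↔ ρ g = 1 := by
      intro g
      rw [MonoidHom.mem_ker]
      constructor
      · intro h
        have := congrArg Units.val h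
        simpa [ρ.asGroupHom_apply] using this
      · intro h
        exact Units.ext (by simpa [ρ.asGroupHom_apply] using h)
    set H := MonoidHom.ker ρ.asGroupHom with hH
    have huM : SL2Irrep.U ((p ^ (a - 1) : ℕ) : ZMod (p ^ a)) ∈ H := by
      rw [memH]
      have h1 : SL2Irrep.U ((p ^ (a - 1) : ℕ) : ZMod (p ^ a)) = u ^ (p ^ (a - 1)) := by
        rw [hu, SL2Irrep.U_pow, mul_one]
      rw [h1, map_pow]
      exact hfM
    have hU : ∀ x : ZMod (p ^ a),
        SL2Irrep.U (((p ^ (a - 1) : ℕ) : ZMod (p ^ a)) * x) ∈ H := by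
      intro x
      have h1 : (SL2Irrep.U ((p ^ (a - 1) : ℕ) : ZMod (p ^ a))) ^ x.val ∈ H := pow_mem huM _
      rwa [SL2Irrep.U_pow, ZMod.natCast_val, ZMod.cast_id, mul_comm] at h1
    have hL : ∀ x : ZMod (p ^ a),
        SL2Irrep.Lo (((p ^ (a - 1) : ℕ) : ZMod (p ^ a)) * x) ∈ H := by
      intro x
      have h1 : SL2Irrep.W * SL2Irrep.U (((p ^ (a - 1) : ℕ) : ZMod (p ^ a)) * (-x))
          * SL2Irrep.W⁻¹ ∈ H :=
        Subgroup.Normal.conj_mem inferInstance _ (hU (-x)) _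
      rwa [show (((p ^ (a - 1) : ℕ) : ZMod (p ^ a)) * (-x))
            = -(((p ^ (a - 1) : ℕ) : ZMod (p ^ a)) * x) by ring,
        SL2Irrep.W_mul_U, neg_neg, mul_assoc, mul_inv_cancel, mul_one] at h1
    -- two cases on a
    rcases eq_or_lt_of_le ha with ha1 | ha2
    · -- a = 1 : the representation is trivial
      have hUall : ∀ x : ZMod (p ^ a), SL2Irrep.U x ∈ H := by
        intro x
        have := hU x
        rwa [show ((p ^ (a - 1) : ℕ) : ZMod (p ^ a)) = 1 by
          rw [← ha1]; norm_num, one_mul] at this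
      have hLall : ∀ x : ZMod (p ^ a), SL2Irrep.Lo x ∈ H := by
        intro x
        have := hL x
        rwa [show ((p ^ (a - 1) : ℕ) : ZMod (p ^ a)) = 1 by
          rw [← ha1]; norm_num, one_mul] at this
      -- units detection via reduction mod p
      have hpdvd : p ∣ p ^ a := dvd_pow_self p (by omega)
      haveI : Fact p.Prime := ⟨hp⟩
      have hunit : ∀ x : ZMod (p ^ a),
          IsUnit x ↔ (ZMod.castHom hpdvd (ZMod p)) x ≠ 0 := by
        intro x
        constructor
        · intro h h0
          obtain ⟨w, hw⟩ := h
          have : IsUnit ((ZMod.castHom hpdvd (ZMod p)) x) := by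
            exact ⟨Units.map (ZMod.castHom hpdvd (ZMod p)).toMonoidHom w, by simp [hw]⟩
          rw [h0] at this
          exact this.ne_zero rfl
        · intro h
          have hx : x = ((x.val : ℕ) : ZMod (p ^ a)) := (ZMod.natCast_rightInverse x).symm
          rw [hx]
          rw [ZMod.isUnit_iff_coprime]
          apply Nat.Coprime.pow_right
          rw [Nat.coprime_comm]
          rw [hp.coprime_iff_not_dvd]
          intro hdvd
          apply h
          rw [ZMod.castHom_apply, ← ZMod.natCast_val, ZMod.natCast_eq_zero_iff]
          exact hdvd
      have hor : ∀ A : Matrix.SpecialLinearGroup (Fin 2) (ZMod (p ^ a)),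
          IsUnit (A.1 0 0) ∨ IsUnit (A.1 1 0) := by
        intro A
        by_contra hcon
        push_neg at hcon
        obtain ⟨h1, h2⟩ := hcon
        rw [hunit, not_not] at h1 h2
        have hdet : A.1 0 0 * A.1 1 1 - A.1 0 1 * A.1 1 0 = 1 := by
          have := A.2; rwa [Matrix.det_fin_two] at this
        have := congrArg (ZMod.castHom hpdvd (ZMod p)) hdet
        rw [_root_.map_sub, _root_.map_mul, _root_.map_mul, _root_.map_one, h1, h2] at this
        simp at this
      -- all elements with unit upper-left corner are in H
      have hAllUnit : ∀ A : Matrix.SpecialLinearGroup (Fin 2) (ZMod (p ^ a)),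
          IsUnit (A.1 0 0) → A ∈ H := by
        intro A hA
        obtain ⟨w, hw⟩ := hA
        have hinv : A.1 0 0 * (↑w⁻¹ : ZMod (p ^ a)) = 1 := by
          rw [← hw, ← Units.val_mul, mul_inv_cancel, Units.val_one]
        rw [SL2Irrep.LDU A _ hinv]
        refine mul_mem (mul_mem (hLall _) ?_) (hUall _)
        rw [SL2Irrep.Dm_decomp_unit _ _ hinv]
        exact mul_mem (mul_mem (mul_mem (mul_mem (mul_mem
          (hUall _) (hLall _)) (hUall _)) (hUall _)) (hLall _)) (hUall _)
      have hAll : ∀ A : Matrix.SpecialLinearGroup (Fin 2) (ZMod (p ^ a)), A ∈ H := by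
        intro A
        rcases hor A with h00 | h10
        · exact hAllUnit A h00
        · by_cases h00 : IsUnit (A.1 0 0)
          · exact hAllUnit A h00
          · have hB : IsUnit ((SL2Irrep.U 1 * A).1 0 0) := by
              have hent : (SL2Irrep.U 1 * A).1 0 0 = A.1 0 0 + A.1 1 0 := by
                rw [Matrix.SpecialLinearGroup.coe_mul]
                simp [SL2Irrep.U, Matrix.mul_apply, Fin.sum_univ_two]
              have h0 : (ZMod.castHom hpdvd (ZMod p)) (A.1 0 0) = 0 := by
                by_contra hne
                exact h00 ((hunit _).mpr hne)
              rw [hunit, hent, _root_.map_add, h0, zero_add]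
              exact (hunit _).mp h10
            have hBH : SL2Irrep.U 1 * A ∈ H := hAllUnit _ hB
            have : (SL2Irrep.U 1)⁻¹ * (SL2Irrep.U 1 * A) ∈ H :=
              mul_mem (inv_mem (hUall 1)) hBH
            rwa [inv_mul_cancel_left] at this
      refine ⟨1, fun g => ?_⟩
      rw [(memH g).mp (hAll g)]
      rfl
    · -- a ≥ 2
      haveI : NeZero (p ^ (a - 1)) := ⟨pow_ne_zero _ hppos.ne'⟩
      have hμ2 : ((p ^ (a - 1) : ℕ) : ZMod (p ^ a)) * ((p ^ (a - 1) : ℕ) : ZMod (p ^ a)) = 0 := by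
        rw [← Nat.cast_mul, ZMod.natCast_eq_zero_iff, ← pow_add]
        exact pow_dvd_pow p (by omega)
      set μ : ZMod (p ^ a) := ((p ^ (a - 1) : ℕ) : ZMod (p ^ a)) with hμdef
      set φ := ZMod.castHom (pow_dvd_pow p (Nat.sub_le a 1)) (ZMod (p ^ (a - 1))) with hφdef
      set π : Matrix.SpecialLinearGroup (Fin 2) (ZMod (p ^ a))
          →* Matrix.SpecialLinearGroup (Fin 2) (ZMod (p ^ (a - 1))) :=
        Matrix.SpecialLinearGroup.map φ with hπdef
      have hker0 : ∀ x : ZMod (p ^ a), φ x = 0 → ∃ c : ZMod (p ^ a), x = μ * c := by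
        intro x hx
        have h1 : ((x.val : ℕ) : ZMod (p ^ (a - 1))) = 0 := by
          rwa [ZMod.natCast_val, ← ZMod.castHom_apply (h := pow_dvd_pow p (Nat.sub_le a 1))]
        rw [ZMod.natCast_eq_zero_iff] at h1
        obtain ⟨c, hc⟩ := h1
        refine ⟨(c : ZMod (p ^ a)), ?_⟩
        have h2 : ((x.val : ℕ) : ZMod (p ^ a)) = x := ZMod.natCast_rightInverse x
        rw [← h2, hc, hμdef]
        push_cast
        ring
      have hφμ : φ μ = 0 := by
        rw [hμdef, map_natCast, ZMod.natCast_self]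
      -- the kernel of the reduction is contained in H
      have hkerπ : ∀ A : Matrix.SpecialLinearGroup (Fin 2) (ZMod (p ^ a)),
          π A = 1 → A ∈ H := by
        intro A hA
        have hent : ∀ i j, φ (A.1 i j) = (1 : Matrix (Fin 2) (Fin 2) (ZMod (p ^ (a - 1)))) i j := by
          intro i j
          have h1 : (π A).1 = (1 : Matrix (Fin 2) (Fin 2) _) := by
            rw [hA]; rfl
          rw [hπdef] at h1
          have h2 := congrFun (congrFun h1 i) j
          simpa [Matrix.SpecialLinearGroup.map_apply_coe, RingHom.mapMatrix_apply, Matrix.map_apply] using h2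
        obtain ⟨α, hα⟩ := hker0 (A.1 0 0 - 1) (by
          rw [_root_.map_sub, _root_.map_one, hent 0 0]
          simp [Matrix.one_apply])
        obtain ⟨β, hβ⟩ := hker0 (A.1 0 1) (by rw [hent 0 1]; simp [Matrix.one_apply])
        obtain ⟨γ, hγ⟩ := hker0 (A.1 1 0) (by rw [hent 1 0]; simp [Matrix.one_apply])
        have hA00 : A.1 0 0 = 1 + μ * α := by linear_combination hα
        have he : A.1 0 0 * (1 - μ * α) = 1 := by
          rw [hA00]
          linear_combination (-(α * α)) * hμ2
        rw [SL2Irrep.LDU A _ he]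
        refine mul_mem (mul_mem ?_ ?_) ?_
        · rw [show A.1 1 0 * (1 - μ * α) = μ * (γ * (1 - μ * α)) by rw [hγ]; ring]
          exact hL _
        · rw [SL2Irrep.Dm_eq_decomp (μ * α) _ _ (by linear_combination (α * α) * hμ2) he hA00]
          refine mul_mem (mul_mem ?_ (hU α)) ?_
          · have hconj : SL2Irrep.U 1 * SL2Irrep.Lo (μ * α) * (SL2Irrep.U 1)⁻¹ ∈ H :=
              Subgroup.Normal.conj_mem inferInstance _ (hL α) _
            rwa [SL2Irrep.U_inv] at hconj
          · rw [show -(μ * α) = μ * (-α) by ring]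
            exact hL _
        · rw [show (1 - μ * α) * A.1 0 1 = μ * ((1 - μ * α) * β) by rw [hβ]; ring]
          exact hU _
      -- surjectivity of the reduction
      have hsurj : ∀ B : Matrix.SpecialLinearGroup (Fin 2) (ZMod (p ^ (a - 1))),
          ∃ A, π A = B := by
        intro B
        have hl : ∀ b : ZMod (p ^ (a - 1)), φ ((b.val : ℕ) : ZMod (p ^ a)) = b := by
          intro b
          rw [map_natCast φ]
          exact ZMod.natCast_rightInverse b
        set l : Fin 2 → Fin 2 → ZMod (p ^ a) := fun i j => (((B.1 i j).val : ℕ) : ZMod (p ^ a))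
          with hldef
        have hdetB : B.1 0 0 * B.1 1 1 - B.1 0 1 * B.1 1 0 = 1 := by
          have := B.2; rwa [Matrix.det_fin_two] at this
        have hφd : φ (l 0 0 * l 1 1 - l 0 1 * l 1 0) = 1 := by
          rw [_root_.map_sub, _root_.map_mul, _root_.map_mul, hldef]
          simp only [hl]
          exact hdetB
        obtain ⟨c, hc⟩ := hker0 (l 0 0 * l 1 1 - l 0 1 * l 1 0 - 1) (by
          rw [_root_.map_sub, hφd, _root_.map_one, sub_self])
        have hd : (l 0 0 * l 1 1 - l 0 1 * l 1 0) * (1 - μ * c) = 1 := by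
          have hd1 : l 0 0 * l 1 1 - l 0 1 * l 1 0 = 1 + μ * c := by linear_combination hc
          rw [hd1]
          linear_combination (-(c * c)) * hμ2
        refine ⟨⟨!![(1 - μ * c) * l 0 0, (1 - μ * c) * l 0 1; l 1 0, l 1 1], ?_⟩, ?_⟩
        · rw [Matrix.det_fin_two_of]
          linear_combination hd
        · rw [hπdef]
          apply Subtype.ext
          have hφc : φ (1 - μ * c) = 1 := by
            rw [_root_.map_sub, _root_.map_mul, hφμ, _root_.map_one, zero_mul, sub_zero]
          show φ.mapMatrix _ = B.1
          rw [RingHom.mapMatrix_apply]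
          ext i j
          fin_cases i <;> fin_cases j <;>
            simp [Matrix.map_apply, _root_.map_mul, hφc, hl, hldef]
      -- build the factored representation
      have hker_le : ∀ g ∈ MonoidHom.ker π,
          ρ.asGroupHom g = 1 := by
        intro g hg
        have : g ∈ H := hkerπ g (MonoidHom.mem_ker.mp hg)
        rwa [hH, MonoidHom.mem_ker] at this
      set q := QuotientGroup.lift (MonoidHom.ker π)
        ρ.asGroupHom (fun {g} hg => MonoidHom.mem_ker.mpr (hker_le g hg)) with hq
      have hbij : Function.Bijective (QuotientGroup.kerLift π) := by
        constructor
        · exact QuotientGroup.kerLift_injective _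
        · intro b
          obtain ⟨g, hg⟩ := hsurj b
          exact ⟨QuotientGroup.mk g, by rwa [QuotientGroup.kerLift_mk]⟩
      set e := MulEquiv.ofBijective _ hbij with he
      refine ⟨(Units.coeHom (V →ₗ[ℂ] V)).comp (q.comp e.symm.toMonoidHom), fun g => ?_⟩
      have h1 : e.symm (π g) = QuotientGroup.mk g := by
        rw [MulEquiv.symm_apply_eq, he, MulEquiv.ofBijective_apply, QuotientGroup.kerLift_mk]
      show ρ g = (Units.coeHom (V →ₗ[ℂ] V)) (q (e.symm (π g)))
      rw [h1, hq, QuotientGroup.lift_mk']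
      simp [ρ.asGroupHom_apply]
  · -- main case: large dimension
    obtain ⟨ζ, hζev, hζN, hζM⟩ :=
      SL2Irrep.exists_eig f (p ^ a) (p ^ (a - 1)) (pow_pos hppos a) hfN hfM
    have hord : orderOf ζ = p ^ a := by
      have hdvd : orderOf ζ ∣ p ^ a := orderOf_dvd_of_pow_eq_one hζN
      obtain ⟨b, hb, hbe⟩ := (Nat.dvd_prime_pow hp).mp hdvd
      rcases eq_or_lt_of_le hb with h | h
      · rw [hbe, h]
      · exfalso
        apply hζM
        apply orderOf_dvd_iff_pow_eq_one.mp
        rw [hbe]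
        exact pow_dvd_pow p (by omega)
    have horb : ∀ t : (ZMod (p ^ a))ˣ,
        f.HasEigenvalue (ζ ^ (((t : ZMod (p ^ a)) * t).val)) := by
      intro t
      obtain ⟨v, hv⟩ := hζev.exists_hasEigenvector
      have hinv : ((t⁻¹ : (ZMod (p ^ a))ˣ) : ZMod (p ^ a)) * (t : ZMod (p ^ a)) = 1 := by
        rw [← Units.val_mul, inv_mul_cancel, Units.val_one]
      have hconj : u * SL2Irrep.Dm _ _ hinv
          = SL2Irrep.Dm _ _ hinv * SL2Irrep.U ((t : ZMod (p ^ a)) * t) := by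
        have h0 := SL2Irrep.D_mul_U ((t⁻¹ : (ZMod (p ^ a))ˣ) : ZMod (p ^ a))
          (t : ZMod (p ^ a)) ((t : ZMod (p ^ a)) * t) hinv
        rw [show ((t⁻¹ : (ZMod (p ^ a))ˣ) : ZMod (p ^ a)) * ((t⁻¹ : (ZMod (p ^ a))ˣ) : ZMod (p ^ a))
            * ((t : ZMod (p ^ a)) * t) = 1 by
          linear_combination (((t⁻¹ : (ZMod (p ^ a))ˣ) : ZMod (p ^ a)) * (t : ZMod (p ^ a)) + 1)
            * hinv] at h0
        rw [hu]
        exact h0.symm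
      set d := SL2Irrep.Dm _ _ hinv with hd
      set s := (((t : ZMod (p ^ a)) * t)).val with hs
      have hUs : SL2Irrep.U ((t : ZMod (p ^ a)) * t) = u ^ s := by
        rw [hu, SL2Irrep.U_pow, mul_one, hs, ZMod.natCast_val, ZMod.cast_id]
      have happ : f (ρ d v) = ζ ^ s • (ρ d v) := by
        have h1 : ρ u ((ρ d) v) = ρ d (ρ (u ^ s) v) := by
          rw [← Module.End.mul_apply, ← _root_.map_mul, hconj, hUs, _root_.map_mul,
            Module.End.mul_apply]
        have h2 : ρ (u ^ s) v = ζ ^ s • v := by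
          rw [map_pow, ← hf]
          exact hv.pow_apply s
        rw [hf, h1, h2, _root_.map_smul]
      have hne : ρ d v ≠ 0 := by
        intro h0
        have h1 : ρ d⁻¹ (ρ d v) = v := by
          rw [← Module.End.mul_apply, ← _root_.map_mul, inv_mul_cancel, _root_.map_one,
            Module.End.one_apply]
        rw [h0, map_zero] at h1
        exact hv.right h1.symm
      exact Module.End.hasEigenvalue_of_hasEigenvector
        ⟨Module.End.mem_eigenspace_iff.mpr happ, hne⟩
    -- the image of the squaring map
    set S : Finset ℂ :=
      Finset.image (fun t : (ZMod (p ^ a))ˣ => ζ ^ (((t : ZMod (p ^ a)) * t).val))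
        Finset.univ with hS
    have hSeig : ∀ c ∈ S, f.HasEigenvalue c := by
      intro c hc
      obtain ⟨t, _, rfl⟩ := Finset.mem_image.mp hc
      exact horb t
    have hcard1 : S.card ≤ Module.finrank ℂ V := by
      have hLI : LinearIndependent ℂ
          (fun c : {x // x ∈ S} => (hSeig c c.2).exists_hasEigenvector.choose) :=
        Module.End.eigenvectors_linearIndependent' f (fun c : {x // x ∈ S} => (c : ℂ))
          Subtype.val_injective _
          (fun c => (hSeig c c.2).exists_hasEigenvector.choose_spec)
      have := hLI.fintype_card_le_finrank
      rwa [Fintype.card_coe] at this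
    -- squares of units: z * z = 1 implies z = ±1
    have hfib : ∀ z : (ZMod (p ^ a))ˣ, z * z = 1 →
        (z : ZMod (p ^ a)) = 1 ∨ (z : ZMod (p ^ a)) = -1 := by
      intro z hz
      have hx : (z : ZMod (p ^ a)) * (z : ZMod (p ^ a)) = 1 := by
        rw [← Units.val_mul, hz, Units.val_one]
      set n : ℤ := (((z : ZMod (p ^ a))).val : ℤ) with hn
      have hxn : ((n : ℤ) : ZMod (p ^ a)) = (z : ZMod (p ^ a)) := by
        rw [hn, Int.cast_natCast]
        exact ZMod.natCast_rightInverse _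
      have hdvd : ((p ^ a : ℕ) : ℤ) ∣ (n - 1) * (n + 1) := by
        rw [← ZMod.intCast_zmod_eq_zero_iff_dvd]
        push_cast
        rw [hxn]
        linear_combination hx
      have hpz : Prime (p : ℤ) := Int.prime_iff_natAbs_prime.mpr (by simpa using hp)
      have hdvd' : ((p : ℤ) ^ a) ∣ (n - 1) * (n + 1) := by
        rwa [show ((p ^ a : ℕ) : ℤ) = (p : ℤ) ^ a by push_cast; ring] at hdvd
      have hnot2 : ¬ ((p : ℤ) ∣ n - 1 ∧ (p : ℤ) ∣ n + 1) := by
        rintro ⟨h1, h2⟩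
        have : (p : ℤ) ∣ 2 := by
          have := dvd_sub h2 h1
          simpa using this
        have := Int.le_of_dvd (by norm_num) this
        omega
      by_cases hd1 : (p : ℤ) ∣ n - 1
      · left
        have hnd2 : ¬ (p : ℤ) ∣ n + 1 := fun h => hnot2 ⟨hd1, h⟩
        have hcop : IsCoprime ((p : ℤ) ^ a) (n + 1) :=
          IsCoprime.pow_left ((hpz.coprime_iff_not_dvd).mpr hnd2)
        have hfin : ((p : ℤ) ^ a) ∣ n - 1 := hcop.dvd_of_dvd_mul_right hdvd'
        have : ((n - 1 : ℤ) : ZMod (p ^ a)) = 0 := by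
          rw [ZMod.intCast_zmod_eq_zero_iff_dvd]
          rwa [show ((p ^ a : ℕ) : ℤ) = (p : ℤ) ^ a by push_cast; ring]
        push_cast at this
        rw [hxn] at this
        rwa [sub_eq_zero] at this
      · right
        have hcop : IsCoprime ((p : ℤ) ^ a) (n - 1) :=
          IsCoprime.pow_left ((hpz.coprime_iff_not_dvd).mpr hd1)
        have hfin : ((p : ℤ) ^ a) ∣ n + 1 := hcop.dvd_of_dvd_mul_left hdvd'
        have : ((n + 1 : ℤ) : ZMod (p ^ a)) = 0 := by
          rw [ZMod.intCast_zmod_eq_zero_iff_dvd]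
          rwa [show ((p ^ a : ℕ) : ℤ) = (p : ℤ) ^ a by push_cast; ring]
        push_cast at this
        rw [hxn] at this
        exact eq_neg_of_add_eq_zero_left this
    have hcount : Fintype.card ((ZMod (p ^ a))ˣ) ≤ 2 * S.card := by
      rw [← Finset.card_univ, hS]
      apply Finset.card_le_mul_card_image
      intro c hc
      obtain ⟨t0, _, ht0⟩ := Finset.mem_image.mp hc
      have hsub : (Finset.univ.filter
          (fun t : (ZMod (p ^ a))ˣ => ζ ^ (((t : ZMod (p ^ a)) * t).val) = c))
          ⊆ {t0, -t0} := by
        intro t ht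
        simp only [Finset.mem_filter] at ht
        have hval : (((t : ZMod (p ^ a)) * t)).val = (((t0 : ZMod (p ^ a)) * t0)).val := by
          have heqp := ht.2.trans ht0.symm
          obtain ⟨zu, hzu⟩ : IsUnit ζ := IsUnit.of_pow_eq_one hζN (pow_ne_zero _ hppos.ne')
          have heqp' : zu ^ (((t : ZMod (p ^ a)) * (t : ZMod (p ^ a))).val)
              = zu ^ (((t0 : ZMod (p ^ a)) * (t0 : ZMod (p ^ a))).val) := by
            apply Units.ext
            simpa [Units.val_pow_eq_pow_val, hzu] using heqp
          have horder : orderOf zu = p ^ a := by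
            rw [← orderOf_units, hzu]; exact hord
          have hmod := pow_eq_pow_iff_modEq.mp heqp'
          rw [horder] at hmod
          have l1 := ZMod.val_lt ((t : ZMod (p ^ a)) * (t : ZMod (p ^ a)))
          have l2 := ZMod.val_lt ((t0 : ZMod (p ^ a)) * (t0 : ZMod (p ^ a)))
          unfold Nat.ModEq at hmod
          rwa [Nat.mod_eq_of_lt l1, Nat.mod_eq_of_lt l2] at hmod
        have heq : (t : ZMod (p ^ a)) * t = (t0 : ZMod (p ^ a)) * t0 :=
          ZMod.val_injective _ hval
        have ht2 : t * t = t0 * t0 := Units.ext (by simpa [Units.val_mul] using heq)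
        have hz : (t / t0) * (t / t0) = 1 := by
          rw [div_mul_div_comm, ht2, div_self']
        rcases hfib _ hz with h1 | h1
        · have h2 : t / t0 = 1 := Units.ext (by simpa using h1)
          have h3 : t = t0 := by rwa [div_eq_one] at h2
          simp [h3]
        · have h2 : t / t0 = -1 := Units.ext (by simpa using h1)
          have h3 : t = -t0 := by
            have h4 := div_eq_iff_eq_mul.mp h2
            simpa using h4
          simp [h3]
      calc (Finset.univ.filter
          (fun t : (ZMod (p ^ a))ˣ => ζ ^ (((t : ZMod (p ^ a)) * t).val) = c)).card
          ≤ ({t0, -t0} : Finset (ZMod (p ^ a))ˣ).card := Finset.card_le_card hsub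
        _ ≤ 2 := Finset.card_insert_le _ _ |>.trans (by simp)
    have hcardu : Fintype.card ((ZMod (p ^ a))ˣ) = Nat.totient (p ^ a) :=
      ZMod.card_units_eq_totient _
    have htot : Nat.totient (p ^ a) = p ^ (a - 1) * (p - 1) :=
      Nat.totient_prime_pow hp (by omega)
    have h2S : p ^ (a - 1) * (p - 1) ≤ 2 * S.card := by
      rw [← htot, ← hcardu]
      exact hcount
    -- final arithmetic
    have hcast : ((p : ℝ) ^ (a - 1)) * ((p : ℝ) - 1) ≤ 2 * (S.card : ℝ) := by
      have := h2S
      have hcast1 : ((p ^ (a - 1) * (p - 1) : ℕ) : ℝ) ≤ ((2 * S.card : ℕ) : ℝ) := by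
        exact_mod_cast this
      push_cast [Nat.cast_sub (by omega : 1 ≤ p)] at hcast1
      convert hcast1 using 2 <;> push_cast <;> ring
    have hfinR : (S.card : ℝ) ≤ (Module.finrank ℂ V : ℝ) := by exact_mod_cast hcard1
    have hq1 : (1 : ℝ) ≤ (p : ℝ) ^ (a - 1) := by
      have h0 : (1 : ℕ) ≤ p ^ (a - 1) := Nat.one_le_iff_ne_zero.mpr (pow_ne_zero _ hppos.ne')
      exact_mod_cast h0
    have hpa : (p : ℝ) ^ a = (p : ℝ) ^ (a - 1) * (p : ℝ) := by
      rw [← pow_succ]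
      congr 1
      omega
    have hp5R : (5 : ℝ) ≤ (p : ℝ) := by exact_mod_cast hp5
    rw [hpa]
    nlinarith [mul_le_mul_of_nonneg_left hp5R (le_trans zero_le_one hq1 : (0:ℝ) ≤ (p:ℝ) ^ (a-1))]
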